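/- Let φ : ℝ^N → ℝ be continuously differentiable and let y : [0,∞) → ℝ^N be a differentiable solution of the gradient flow ẏ(t) = −∇φ(y(t)) whose Lojasiewicz auxiliary quantity is controlled as follows: suppose y_∞ ∈ ℝ^N, γ ∈ [1/2, 1), C_L > 0 and r > 0 are such that |φ(z) − φ(y_∞)|^γ ≤ C_L ‖∇φ(z)‖ for all z with ‖z − y_∞‖ < r, and φ(y(t)) > φ(y_∞) for t in an interval [T₀, T₁] during which ‖y(t) − y_∞‖ < r. Then the function f(t) = (φ(y(t)) − φ(y_∞))^{1−γ} satisfies the differential inequality df/dt ≤ −((1−γ)/C_L) ‖∇φ(y(t))‖ for t ∈ [T₀, T₁]; consequently ∫_{T₀}^{t} ‖ẏ(s)‖ ds ≤ (C_L/(1−γ)) (f(T₀) − f(t)) for all t ∈ [T₀, T₁]. -/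

import Mathlib

open scoped BigOperators

/-- along a gradient flow `ẏ = −∇φ(y)`, under the Lojasiewicz gradient
inequality near `y_∞` and `φ(y(t)) > φ(y_∞)` on `[T₀, T₁]` with `‖y(t) − y_∞‖ < r`, the
auxiliary function `f(t) = (φ(y(t)) − φ(y_∞))^{1−γ}` satisfies
`df/dt ≤ −((1−γ)/C_L) ‖∇φ(y(t))‖`, and consequently
`∫_{T₀}^{t} ‖ẏ(s)‖ ds ≤ (C_L/(1−γ)) (f(T₀) − f(t))` for `t ∈ [T₀, T₁]`. -/
theorem lojasiewicz_auxiliary_decay {Nn : ℕ}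
    (φ : EuclideanSpace ℝ (Fin Nn) → ℝ) (hφ : ContDiff ℝ 1 φ)
    (y y' : ℝ → EuclideanSpace ℝ (Fin Nn))
    (hy : ∀ t, 0 ≤ t → HasDerivAt y (y' t) t)
    (hgf : ∀ t, 0 ≤ t → y' t = -gradient φ (y t))
    (y_inf : EuclideanSpace ℝ (Fin Nn)) (γ C_L r : ℝ)
    (hγ : γ ∈ Set.Ico (1/2 : ℝ) 1) (hCL : 0 < C_L) (hr : 0 < r)
    (hLoj : ∀ z, ‖z - y_inf‖ < r → |φ z - φ y_inf| ^ γ ≤ C_L * ‖gradient φ z‖)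
    (T₀ T₁ : ℝ) (hT₀ : 0 ≤ T₀) (hT₀₁ : T₀ ≤ T₁)
    (hpos : ∀ t ∈ Set.Icc T₀ T₁, φ y_inf < φ (y t))
    (hin : ∀ t ∈ Set.Icc T₀ T₁, ‖y t - y_inf‖ < r) :
    (∀ t ∈ Set.Icc T₀ T₁,
      DifferentiableAt ℝ (fun s => (φ (y s) - φ y_inf) ^ (1 - γ)) t ∧
      deriv (fun s => (φ (y s) - φ y_inf) ^ (1 - γ)) t
        ≤ -((1 - γ) / C_L) * ‖gradient φ (y t)‖) ∧
    (∀ t ∈ Set.Icc T₀ T₁,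
      ∫ s in T₀..t, ‖y' s‖
        ≤ (C_L / (1 - γ)) *
          ((φ (y T₀) - φ y_inf) ^ (1 - γ) - (φ (y t) - φ y_inf) ^ (1 - γ))) := by
  have hγ1 : γ < 1 := hγ.2
  have h1γ : (0:ℝ) < 1 - γ := by linarith
  set A : ℝ → ℝ := fun s => ‖gradient φ (y s)‖ with hA
  set g : ℝ → ℝ := fun s => φ (y s) - φ y_inf with hg
  set D : ℝ → ℝ := fun s => -(A s ^ 2) * (1 - γ) * g s ^ (1 - γ - 1) with hD
  -- derivative of g at points of the interval
  have hgderiv : ∀ t ∈ Set.Icc T₀ T₁, HasDerivAt g (-(A t ^ 2)) t := by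
    intro t ht
    have ht0 : 0 ≤ t := le_trans hT₀ ht.1
    have h1 := ((hφ.differentiable one_ne_zero) (y t)).hasGradientAt.hasFDerivAt
    have h2 := (h1.comp_hasDerivAt t (hy t ht0)).sub_const (φ y_inf)
    have h3 : (InnerProductSpace.toDual ℝ _ (gradient φ (y t))) (y' t) = -(A t ^ 2) := by
      rw [hgf t ht0, InnerProductSpace.toDual_apply_apply, inner_neg_right,
        real_inner_self_eq_norm_sq]
    rw [← h3]
    exact h2
  have hgpos : ∀ t ∈ Set.Icc T₀ T₁, 0 < g t := fun t ht => sub_pos.mpr (hpos t ht)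
  -- derivative of f
  have hfderiv : ∀ t ∈ Set.Icc T₀ T₁,
      HasDerivAt (fun s => g s ^ (1 - γ)) (D t) t := by
    intro t ht
    have := (hgderiv t ht).rpow_const (p := 1 - γ) (Or.inl (ne_of_gt (hgpos t ht)))
    simpa [hD, mul_comm, mul_assoc, mul_left_comm] using this
  -- the key inequality
  have hDle : ∀ t ∈ Set.Icc T₀ T₁, D t ≤ -((1 - γ) / C_L) * A t := by
    intro t ht
    have hb : 0 < g t := hgpos t ht
    have hbγ : 0 < g t ^ γ := Real.rpow_pos_of_pos hb γ
    have hL : g t ^ γ ≤ C_L * A t := by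
      have := hLoj (y t) (hin t ht)
      rwa [abs_of_pos hb] at this
    have hA0 : 0 ≤ A t := norm_nonneg _
    have hApos : 0 < A t := by nlinarith
    have hexp : (1 - γ - 1 : ℝ) = -γ := by ring
    rw [hD]
    simp only
    rw [hexp, Real.rpow_neg hb.le]
    rw [neg_mul, neg_mul, neg_mul, neg_le_neg_iff]
    rw [div_mul_eq_mul_div, div_le_iff₀ hCL]
    have hinv : (g t ^ γ)⁻¹ * g t ^ γ = 1 := inv_mul_cancel₀ (ne_of_gt hbγ)
    have hmul : (g t ^ γ)⁻¹ * (g t ^ γ) ≤ (g t ^ γ)⁻¹ * (C_L * A t) :=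
      mul_le_mul_of_nonneg_left hL (inv_pos.mpr hbγ).le
    rw [hinv] at hmul
    nlinarith [mul_le_mul_of_nonneg_left hmul (mul_nonneg h1γ.le hApos.le)]
  constructor
  · intro t ht
    have hd := hfderiv t ht
    exact ⟨hd.differentiableAt, hd.deriv ▸ hDle t ht⟩
  · intro t ht
    have hsub : Set.Icc T₀ t ⊆ Set.Icc T₀ T₁ := Set.Icc_subset_Icc le_rfl ht.2
    have huIcc : Set.uIcc T₀ t = Set.Icc T₀ t := Set.uIcc_of_le ht.1
    -- continuity facts on [T₀, t]
    have hycont : ContinuousOn y (Set.Icc T₀ t) := fun s hs =>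
      ((hy s (le_trans hT₀ hs.1)).continuousAt).continuousWithinAt
    have hgradcont : Continuous (gradient φ) := by
      unfold gradient
      exact (InnerProductSpace.toDual ℝ _).symm.continuous.comp (hφ.continuous_fderiv one_ne_zero)
    have hAcont : ContinuousOn A (Set.Icc T₀ t) :=
      (hgradcont.comp_continuousOn hycont).norm
    have hgcont : ContinuousOn g (Set.Icc T₀ t) :=
      ((hφ.continuous).comp_continuousOn hycont).sub continuousOn_const
    have hDcont : ContinuousOn D (Set.Icc T₀ t) := by
      apply ((hAcont.pow 2).neg.mul continuousOn_const).mul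
      exact hgcont.rpow_const fun s hs => Or.inl (ne_of_gt (hgpos s (hsub hs)))
    -- rewrite the integrand
    have heq : Set.EqOn (fun s => ‖y' s‖) A (Set.uIcc T₀ t) := by
      intro s hs
      rw [huIcc] at hs
      simp only [hA, hgf s (le_trans hT₀ hs.1), norm_neg]
    rw [intervalIntegral.integral_congr heq]
    -- FTC for f
    have hftc : ∫ s in T₀..t, D s = g t ^ (1 - γ) - g T₀ ^ (1 - γ) := by
      apply intervalIntegral.integral_eq_sub_of_hasDerivAt
      · intro s hs
        rw [huIcc] at hs
        exact hfderiv s (hsub hs)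
      · rw [intervalIntegrable_iff_integrableOn_Icc_of_le ht.1]
        exact hDcont.integrableOn_compact isCompact_Icc
    -- pointwise bound
    have hpt : ∀ s ∈ Set.Icc T₀ t, A s ≤ -(C_L / (1 - γ)) * D s := by
      intro s hs
      have h := hDle s (hsub hs)
      have hc : 0 < C_L / (1 - γ) := div_pos hCL h1γ
      have := mul_le_mul_of_nonneg_left h hc.le
      calc A s = -(C_L / (1 - γ)) * (-((1 - γ) / C_L) * A s) := by
            field_simp
        _ ≤ -(C_L / (1 - γ)) * D s := by nlinarith
    have hintle : ∫ s in T₀..t, A s ≤ ∫ s in T₀..t, -(C_L / (1 - γ)) * D s := by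
      apply intervalIntegral.integral_mono_on ht.1
      · rw [intervalIntegrable_iff_integrableOn_Icc_of_le ht.1]
        exact hAcont.integrableOn_compact isCompact_Icc
      · rw [intervalIntegrable_iff_integrableOn_Icc_of_le ht.1]
        exact (continuousOn_const.mul hDcont).integrableOn_compact isCompact_Icc
      · exact hpt
    calc ∫ s in T₀..t, A s ≤ ∫ s in T₀..t, -(C_L / (1 - γ)) * D s := hintle
      _ = -(C_L / (1 - γ)) * ∫ s in T₀..t, D s := intervalIntegral.integral_const_mul _ _
      _ = (C_L / (1 - γ)) * (g T₀ ^ (1 - γ) - g t ^ (1 - γ)) := by rw [hftc]; ring
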